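/- Let k, n ≥ 1 be natural numbers with 4k dividing n, and let s : Fin (k·n) → Fin n be a sequence of k·n elements of Fin n. Partition the index set Fin (k·n) into r = 4k² consecutive segments, each of length n/(4k). Then there exists a set J of exactly 2k of these segments such that: (1) the number of elements v ∈ Fin n every occurrence of which in s lies inside segments belonging to J is at least n / (2 · C(4k², 2k)), and (2) the number of elements v ∈ Fin n having no occurrence in any segment belonging to J is at least n/2. Here C(·,·) denotes the binomial coefficient. -/

import Mathlib

/-- Index `i ∈ Fin (k·n)` lies in the `seg`-th consecutive segment of length `n/(4k)`. -/
def inSegment (k n : ℕ) (seg : Fin (4 * k ^ 2)) (i : Fin (k * n)) : Prop :=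
  (seg : ℕ) * (n / (4 * k)) ≤ (i : ℕ) ∧ (i : ℕ) < ((seg : ℕ) + 1) * (n / (4 * k))

/-- Dividing a sequence `s` of `k·n` elements of `Fin n` into `4k²` consecutive
segments of length `n/(4k)`, there is a choice of `2k` segments `J` such that
at least `n/(2·C(4k²,2k))` elements of `Fin n` occur only inside segments of `J`,
and at least `n/2` elements occur in no segment of `J`. -/
theorem segment_assignment (k n : ℕ) (hk : 1 ≤ k) (hn : 1 ≤ n) (hdvd : 4 * k ∣ n)
    (s : Fin (k * n) → Fin n) :
    ∃ J : Finset (Fin (4 * k ^ 2)), J.card = 2 * k ∧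
      (Nat.card {v : Fin n // ∀ i : Fin (k * n), s i = v → ∃ seg ∈ J, inSegment k n seg i} : ℝ) ≥
        (n : ℝ) / (2 * (Nat.choose (4 * k ^ 2) (2 * k) : ℝ)) ∧
      (Nat.card {v : Fin n // ∀ i : Fin (k * n), s i = v → ∀ seg ∈ J, ¬ inSegment k n seg i} : ℝ) ≥
        (n : ℝ) / 2 := by
  classical
  set L := n / (4 * k) with hLdef
  have hn4 : n = 4 * k * L := (Nat.mul_div_cancel' hdvd).symm
  have hL : 0 < L := Nat.div_pos (Nat.le_of_dvd hn hdvd) (by omega)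
  have hkn : k * n = 4 * k ^ 2 * L := by rw [hn4]; ring
  -- the segment of an index
  have hsegb : ∀ i : Fin (k * n), (i : ℕ) / L < 4 * k ^ 2 := by
    intro i
    rw [Nat.div_lt_iff_lt_mul hL]
    have := i.isLt
    omega
  set segOf : Fin (k * n) → Fin (4 * k ^ 2) := fun i => ⟨(i : ℕ) / L, hsegb i⟩ with hsegOf
  have hseg_iff : ∀ (seg : Fin (4 * k ^ 2)) (i : Fin (k * n)),
      inSegment k n seg i ↔ segOf i = seg := by
    intro seg i
    constructor
    · rintro ⟨h1, h2⟩
      exact Fin.ext (Nat.div_eq_of_lt_le h1 h2)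
    · rintro rfl
      refine ⟨Nat.div_mul_le_self _ _, ?_⟩
      show (i : ℕ) < ((i : ℕ) / L + 1) * L
      rw [add_mul, one_mul]
      exact Nat.lt_div_mul_add hL
  set S : Fin n → Finset (Fin (4 * k ^ 2)) :=
    fun v => (Finset.univ.filter (fun i => s i = v)).image segOf with hS
  -- good values: segment set small
  set Good : Finset (Fin n) := Finset.univ.filter (fun v => (S v).card ≤ 2 * k) with hGood
  have hfibers : (Finset.univ : Finset (Fin (k * n))).card
      = ∑ v ∈ Finset.univ, ((Finset.univ.filter (fun i => s i = v)).card) :=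
    Finset.card_eq_sum_card_fiberwise (fun i _ => Finset.mem_univ (s i))
  have hGoodcard : n ≤ 2 * Good.card := by
    set Bad : Finset (Fin n) := Finset.univ.filter (fun v => ¬ (S v).card ≤ 2 * k) with hBad
    have hsum : Bad.card * (2 * k + 1) ≤ k * n := by
      calc Bad.card * (2 * k + 1)
          ≤ ∑ v ∈ Bad, ((Finset.univ.filter (fun i => s i = v)).card) := by
            simpa [mul_comm] using Finset.card_nsmul_le_sum Bad
              (fun v => (Finset.univ.filter (fun i => s i = v)).card) (2 * k + 1)
              (fun v hv => by
                have hv' : ¬ (S v).card ≤ 2 * k := (Finset.mem_filter.mp hv).2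
                have himg : (S v).card ≤ (Finset.univ.filter (fun i => s i = v)).card :=
                  Finset.card_image_le
                show 2 * k + 1 ≤ (Finset.univ.filter (fun i => s i = v)).card
                omega)
        _ ≤ ∑ v ∈ Finset.univ, ((Finset.univ.filter (fun i => s i = v)).card) :=
            Finset.sum_le_sum_of_subset (Finset.subset_univ _)
        _ = k * n := by rw [← hfibers]; simp
    have hGB : Good.card + Bad.card = n := by
      rw [hGood, hBad, Finset.card_filter_add_card_filter_not]
      simp
    have h2B : 2 * Bad.card ≤ n := by
      have : 2 * Bad.card * (2 * k + 1) ≤ n * (2 * k + 1) := by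
        calc 2 * Bad.card * (2 * k + 1) = 2 * (Bad.card * (2 * k + 1)) := by ring
          _ ≤ 2 * (k * n) := by omega
          _ ≤ n * (2 * k + 1) := by nlinarith
      exact Nat.le_of_mul_le_mul_right this (by omega)
    omega
  -- pigeonhole over 2k-subsets
  set T : Finset (Finset (Fin (4 * k ^ 2))) := Finset.univ.powersetCard (2 * k) with hT
  have hTcard : T.card = Nat.choose (4 * k ^ 2) (2 * k) := by
    rw [hT, Finset.card_powersetCard, Finset.card_univ, Fintype.card_fin]
  have h2k4k2 : 2 * k ≤ 4 * k ^ 2 := by nlinarith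
  have hTne : T.Nonempty := by
    obtain ⟨u, _, hu⟩ := Finset.exists_superset_card_eq (s := (∅ : Finset (Fin (4 * k ^ 2))))
      (by simp) (by simpa using h2k4k2)
    exact ⟨u, by simp [hT, Finset.mem_powersetCard, hu]⟩
  have hcover : Good ⊆ T.biUnion (fun J => Good.filter (fun v => S v ⊆ J)) := by
    intro v hv
    have hvc : (S v).card ≤ 2 * k := (Finset.mem_filter.mp hv).2
    obtain ⟨u, hsu, hu⟩ := Finset.exists_superset_card_eq hvc (by simpa using h2k4k2)
    refine Finset.mem_biUnion.mpr ⟨u, ?_, ?_⟩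
    · simp [hT, Finset.mem_powersetCard, hu]
    · exact Finset.mem_filter.mpr ⟨hv, hsu⟩
  obtain ⟨J, hJT, hJmax⟩ := T.exists_max_image (fun J => (Good.filter (fun v => S v ⊆ J)).card) hTne
  have hJcard : J.card = 2 * k := (Finset.mem_powersetCard.mp hJT).2
  have hGle : Good.card ≤ T.card * (Good.filter (fun v => S v ⊆ J)).card := by
    calc Good.card ≤ (T.biUnion (fun J => Good.filter (fun v => S v ⊆ J))).card :=
          Finset.card_le_card hcover
      _ ≤ ∑ J' ∈ T, (Good.filter (fun v => S v ⊆ J')).card := Finset.card_biUnion_le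
      _ ≤ T.card * (Good.filter (fun v => S v ⊆ J)).card := by
          simpa using Finset.sum_le_card_nsmul T _ _ (fun J' hJ' => hJmax J' hJ')
  refine ⟨J, hJcard, ?_, ?_⟩
  · -- part (1)
    have hcond : ∀ v : Fin n,
        (∀ i : Fin (k * n), s i = v → ∃ seg ∈ J, inSegment k n seg i) ↔ S v ⊆ J := by
      intro v
      rw [hS]
      simp only [Finset.image_subset_iff, Finset.mem_filter, Finset.mem_univ, true_and]
      constructor
      · intro h i hi
        obtain ⟨seg, hsegJ, hseg⟩ := h i hi
        show segOf i ∈ J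
        rwa [← (hseg_iff seg i).mp hseg] at hsegJ
      · intro h i hi
        exact ⟨segOf i, h i hi, (hseg_iff _ i).mpr rfl⟩
    have hcount : Nat.card {v : Fin n // ∀ i : Fin (k * n), s i = v → ∃ seg ∈ J, inSegment k n seg i}
        = (Finset.univ.filter (fun v : Fin n => S v ⊆ J)).card := by
      rw [Nat.card_eq_fintype_card, Fintype.card_subtype]
      congr 1
      apply Finset.filter_congr
      intro v _
      simp [hcond v]
    rw [hcount]
    have hm : (Good.filter (fun v => S v ⊆ J)).card
        ≤ (Finset.univ.filter (fun v : Fin n => S v ⊆ J)).card := by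
      apply Finset.card_le_card
      intro v hv
      rw [Finset.mem_filter] at hv ⊢
      exact ⟨Finset.mem_univ _, hv.2⟩
    set m := (Finset.univ.filter (fun v : Fin n => S v ⊆ J)).card with hm'
    have hkey : n ≤ 2 * (Nat.choose (4 * k ^ 2) (2 * k)) * m := by
      have h1 : Good.card ≤ Nat.choose (4 * k ^ 2) (2 * k) * (Good.filter (fun v => S v ⊆ J)).card :=
        hTcard ▸ hGle
      calc n ≤ 2 * Good.card := hGoodcard
        _ ≤ 2 * (Nat.choose (4 * k ^ 2) (2 * k) * (Good.filter (fun v => S v ⊆ J)).card) :=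
            Nat.mul_le_mul_left 2 h1
        _ ≤ 2 * (Nat.choose (4 * k ^ 2) (2 * k) * m) :=
            Nat.mul_le_mul_left 2 (Nat.mul_le_mul_left _ hm)
        _ = 2 * (Nat.choose (4 * k ^ 2) (2 * k)) * m := (mul_assoc _ _ _).symm
    have hCpos : 0 < (Nat.choose (4 * k ^ 2) (2 * k)) := Nat.choose_pos h2k4k2
    rw [ge_iff_le, div_le_iff₀ (by positivity)]
    have : (n : ℝ) ≤ (2 * (Nat.choose (4 * k ^ 2) (2 * k)) * m : ℕ) := by exact_mod_cast hkey
    push_cast at this ⊢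
    linarith
  · -- part (2)
    have hcond : ∀ v : Fin n,
        (∀ i : Fin (k * n), s i = v → ∀ seg ∈ J, ¬ inSegment k n seg i) ↔
        (∀ i : Fin (k * n), s i = v → segOf i ∉ J) := by
      intro v
      constructor
      · intro h i hi hmem
        exact h i hi (segOf i) hmem ((hseg_iff _ i).mpr rfl)
      · intro h i hi seg hsegJ hseg
        have heq : segOf i = seg := (hseg_iff seg i).mp hseg
        rw [← heq] at hsegJ
        exact h i hi hsegJ
    have hcount : Nat.card {v : Fin n // ∀ i : Fin (k * n), s i = v → ∀ seg ∈ J, ¬ inSegment k n seg i}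
        = (Finset.univ.filter (fun v : Fin n => ∀ i : Fin (k * n), s i = v → segOf i ∉ J)).card := by
      rw [Nat.card_eq_fintype_card, Fintype.card_subtype]
      congr 1
      apply Finset.filter_congr
      intro v _
      simp only [hcond v]
    rw [hcount]
    set IJ : Finset (Fin (k * n)) := Finset.univ.filter (fun i => segOf i ∈ J) with hIJ
    have hIJcard : IJ.card ≤ 2 * k * L := by
      have hsub : IJ ⊆ J.biUnion (fun seg => Finset.univ.filter (fun i => segOf i = seg)) := by
        intro i hi
        exact Finset.mem_biUnion.mpr ⟨segOf i, (Finset.mem_filter.mp hi).2, by simp⟩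
      calc IJ.card ≤ (J.biUnion (fun seg => Finset.univ.filter (fun i => segOf i = seg))).card :=
            Finset.card_le_card hsub
        _ ≤ ∑ seg ∈ J, (Finset.univ.filter (fun i => segOf i = seg)).card := Finset.card_biUnion_le
        _ ≤ ∑ seg ∈ J, L := by
            apply Finset.sum_le_sum
            intro seg _
            have : (Finset.univ.filter (fun i : Fin (k * n) => segOf i = seg)).card
                ≤ (Finset.range L).card := by
              apply Finset.card_le_card_of_injOn (fun i : Fin (k * n) => (i : ℕ) - (seg : ℕ) * L)
              · intro i hi
                obtain ⟨h1, h2⟩ := (hseg_iff seg i).mpr (Finset.mem_filter.mp hi).2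
                rw [← hLdef] at h1 h2
                rw [add_mul, one_mul] at h2
                simp only [Finset.mem_coe, Finset.mem_range]
                omega
              · intro i hi j hj hij
                obtain ⟨h1, h2⟩ := (hseg_iff seg i).mpr (Finset.mem_filter.mp hi).2
                obtain ⟨h3, h4⟩ := (hseg_iff seg j).mpr (Finset.mem_filter.mp hj).2
                rw [← hLdef] at h1 h2 h3 h4
                rw [add_mul, one_mul] at h2 h4
                simp only at hij
                have : (i : ℕ) = (j : ℕ) := by omega
                exact Fin.ext this
            simpa using this
        _ = 2 * k * L := by rw [Finset.sum_const, hJcard]; ring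
    have hcompl : Finset.univ.filter (fun v : Fin n => ∀ i : Fin (k * n), s i = v → segOf i ∉ J)
        = Finset.univ \ (IJ.image s) := by
      ext v
      simp only [Finset.mem_filter, Finset.mem_univ, true_and, Finset.mem_sdiff,
        Finset.mem_image]
      constructor
      · rintro h ⟨i, hiIJ, hi⟩
        exact h i hi (Finset.mem_filter.mp hiIJ).2
      · intro h i hi hiJ
        exact h ⟨i, Finset.mem_filter.mpr ⟨Finset.mem_univ i, hiJ⟩, hi⟩
    rw [hcompl]
    have hcard : (Finset.univ \ (IJ.image s)).card = n - (IJ.image s).card := by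
      rw [Finset.card_sdiff_of_subset (Finset.subset_univ _), Finset.card_univ, Fintype.card_fin]
    have himg : (IJ.image s).card ≤ 2 * k * L := le_trans Finset.card_image_le hIJcard
    have hfin : n ≤ 2 * ((Finset.univ \ (IJ.image s)).card) := by
      have h2 : 2 * (2 * k * L) = n := by rw [hn4]; ring
      rw [hcard]
      omega
    rw [ge_iff_le, div_le_iff₀ (by norm_num)]
    have : (n : ℝ) ≤ (2 * ((Finset.univ \ (IJ.image s)).card) : ℕ) := by exact_mod_cast hfin
    push_cast at this ⊢
    linarith
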